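/- Let B be the bilateral backward shift on ℓ^p(ℤ, ω) with sup_{n∈ℤ} ω_n/ω_{n+1} < ∞, and let Γ ⊂ ℂ with Γ \ {0} non-empty. Suppose x, y ∈ ℓ^p(ℤ, ω) with y ≠ 0, y_{k_0} ≠ 0, and there are λ_i ∈ Γ \ {0} and strictly increasing n_i with ‖λ_i B^{n_i} x − y‖ → 0. Then ω_{k_0 + n_i}/|λ_i| → 0 as i → ∞. -/

import Mathlib

open MeasureTheory Filter Topology
open scoped ENNReal

noncomputable section

/-- The weighted measure on the index set `I` giving the point `k` mass `(ω k) ^ p`,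
so that `Lp ℂ p (wMeasure p ω)` is the weighted sequence space `ℓ^p(I, ω)`. -/
def wMeasure {I : Type*} [MeasurableSpace I] (p : ENNReal) (ω : I → ℝ) : Measure I :=
  Measure.sum (fun k => ENNReal.ofReal ((ω k) ^ p.toReal) • Measure.dirac k)

lemma wMeasure_lintegral (p : ENNReal) (ω : ℤ → ℝ) (f : ℤ → ℝ≥0∞) :
    ∫⁻ a, f a ∂(wMeasure p ω) = ∑' k, f k * ENNReal.ofReal ((ω k) ^ p.toReal) := by
  rw [wMeasure, lintegral_sum_measure]
  congr 1
  funext k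
  rw [lintegral_smul_measure, lintegral_dirac, mul_comm, smul_eq_mul]

lemma wMeasure_singleton (p : ENNReal) (ω : ℤ → ℝ) (j : ℤ) :
    wMeasure p ω {j} = ENNReal.ofReal ((ω j) ^ p.toReal) := by
  have : wMeasure p ω {j} = ∫⁻ a, Set.indicator {j} (fun _ => 1) a ∂(wMeasure p ω) := by
    rw [lintegral_indicator (measurableSet_singleton j)]
    simp
  rw [this, wMeasure_lintegral]
  rw [tsum_eq_single j]
  · simp
  · intro k hk
    simp [Set.indicator_of_notMem, hk]

lemma wMeasure_ae_eq {p : ENNReal} {ω : ℤ → ℝ} (hω : ∀ k, 0 < ω k)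
    {f g : ℤ → ℂ} (h : f =ᵐ[wMeasure p ω] g) : f = g := by
  funext k
  by_contra hk
  have h0 : wMeasure p ω {a | ¬ f a = g a} = 0 := h
  have hle : wMeasure p ω {k} ≤ wMeasure p ω {a | ¬ f a = g a} :=
    measure_mono (by intro a ha; simp only [Set.mem_singleton_iff] at ha; subst ha; exact hk)
  rw [h0, wMeasure_singleton, nonpos_iff_eq_zero, ENNReal.ofReal_eq_zero] at hle
  exact absurd hle (not_le.mpr (Real.rpow_pos_of_pos (hω k) _))

lemma eval_enorm_le {p : ENNReal} {ω : ℤ → ℝ} (hω : ∀ k, 0 < ω k)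
    (hp0 : p ≠ 0) (hp : p ≠ ∞) (f : Lp ℂ p (wMeasure p ω)) (k : ℤ) :
    (‖f k‖₊ : ℝ≥0∞) * ENNReal.ofReal (ω k) ≤ eLpNorm f p (wMeasure p ω) := by
  have hpr : 0 < p.toReal := ENNReal.toReal_pos hp0 hp
  rw [eLpNorm_eq_lintegral_rpow_enorm_toReal hp0 hp]
  rw [← ENNReal.rpow_le_rpow_iff hpr, ← ENNReal.rpow_mul, one_div_mul_cancel hpr.ne',
    ENNReal.rpow_one, ENNReal.mul_rpow_of_nonneg _ _ hpr.le,
    ENNReal.ofReal_rpow_of_pos (hω k)]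
  calc (‖f k‖₊ : ℝ≥0∞) ^ p.toReal * ENNReal.ofReal ((ω k) ^ p.toReal)
      ≤ ∑' j, (‖f j‖₊ : ℝ≥0∞) ^ p.toReal * ENNReal.ofReal ((ω j) ^ p.toReal) :=
        ENNReal.le_tsum k
    _ = ∫⁻ a, (‖f a‖₊ : ℝ≥0∞) ^ p.toReal ∂(wMeasure p ω) :=
        (wMeasure_lintegral p ω _).symm

lemma eval_norm_le {p : ENNReal} {ω : ℤ → ℝ} (hω : ∀ k, 0 < ω k)
    (hp0 : p ≠ 0) (hp : p ≠ ∞) (f : Lp ℂ p (wMeasure p ω)) (k : ℤ) :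
    ‖f k‖ * ω k ≤ ‖f‖ := by
  have h := eval_enorm_le hω hp0 hp f k
  have h2 := ENNReal.toReal_mono (Lp.eLpNorm_ne_top f) h
  rw [ENNReal.toReal_mul, ENNReal.coe_toReal, coe_nnnorm,
    ENNReal.toReal_ofReal (hω k).le] at h2
  rw [Lp.norm_def]
  exact h2

/-- if `λ_i • B ^ (n_i) x → y` in `ℓ^p(ℤ, ω)` with `y (k₀) ≠ 0` and
`λ_i ∈ Γ \ {0}`, then `ω (k₀ + n_i) / |λ_i| → 0`. -/
theorem stmt11 (p : ENNReal) [Fact (1 ≤ p)] (hp : p ≠ ∞) (ω : ℤ → ℝ) (hω : ∀ k, 0 < ω k)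
    (hbdd : ∃ C : ℝ, ∀ k : ℤ, ω k / ω (k + 1) ≤ C)
    (B : Lp ℂ p (wMeasure p ω) →L[ℂ] Lp ℂ p (wMeasure p ω))
    (hB : ∀ (x : Lp ℂ p (wMeasure p ω)) (k : ℤ), B x k = x (k + 1))
    (Γ : Set ℂ) (hΓ : (Γ \ {0}).Nonempty)
    (x y : Lp ℂ p (wMeasure p ω)) (hy : y ≠ 0) (k₀ : ℤ) (hk₀ : y k₀ ≠ 0)
    (lam : ℕ → ℂ) (hlam : ∀ i, lam i ∈ Γ \ {0})
    (n : ℕ → ℕ) (hn : StrictMono n)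
    (hconv : Tendsto (fun i => lam i • (B ^ n i) x) atTop (nhds y)) :
    Tendsto (fun i => ω (k₀ + (n i : ℤ)) / ‖lam i‖) atTop (nhds 0) := by
  have hp0 : p ≠ 0 := (lt_of_lt_of_le zero_lt_one Fact.out).ne'
  have hpr : 0 < p.toReal := ENNReal.toReal_pos hp0 hp
  -- iterated shift formula
  have hpow : ∀ (m : ℕ) (z : Lp ℂ p (wMeasure p ω)) (k : ℤ), ((B ^ m) z) k = z (k + m) := by
    intro m
    induction m with
    | zero => intro z k; simp
    | succ m ih =>
      intro z k
      have h1 : (B ^ (m + 1)) z = (B ^ m) (B z) := by rw [pow_succ]; rfl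
      rw [h1, ih (B z) k, hB]
      congr 1
      push_cast
      ring
  -- smul at a point
  have hsmul : ∀ (c : ℂ) (w : Lp ℂ p (wMeasure p ω)) (k : ℤ), (c • w) k = c * w k := by
    intro c w k
    have := wMeasure_ae_eq hω (Lp.coeFn_smul c w)
    rw [this]
    simp
  -- sub at a point
  have hsub : ∀ (v w : Lp ℂ p (wMeasure p ω)) (k : ℤ), (v - w) k = v k - w k := by
    intro v w k
    have := wMeasure_ae_eq hω (Lp.coeFn_sub v w)
    rw [this]
    simp
  -- evaluation convergence
  have heval : Tendsto (fun i => lam i * x (k₀ + (n i : ℤ))) atTop (nhds (y k₀)) := by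
    rw [tendsto_iff_norm_sub_tendsto_zero]
    have hb : ∀ i, ‖lam i * x (k₀ + (n i : ℤ)) - y k₀‖ ≤ ‖lam i • (B ^ n i) x - y‖ / ω k₀ := by
      intro i
      rw [le_div_iff₀ (hω k₀)]
      have := eval_norm_le hω hp0 hp (lam i • (B ^ n i) x - y) k₀
      rwa [hsub, hsmul, hpow] at this
    have hnorm : Tendsto (fun i => ‖lam i • (B ^ n i) x - y‖ / ω k₀) atTop (nhds 0) := by
      have : Tendsto (fun i => ‖lam i • (B ^ n i) x - y‖) atTop (nhds 0) := by
        rw [← tendsto_iff_norm_sub_tendsto_zero]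
        exact hconv
      simpa using this.div_const (ω k₀)
    exact squeeze_zero (fun i => norm_nonneg _) hb hnorm
  -- the summability-based decay
  have hA : Tendsto (fun i => ‖x (k₀ + (n i : ℤ))‖ * ω (k₀ + (n i : ℤ))) atTop (nhds 0) := by
    set g : ℤ → ℝ≥0∞ := fun k => (‖x k‖₊ : ℝ≥0∞) * ENNReal.ofReal (ω k) with hg
    have hgtop : ∀ k, g k ≠ ∞ := fun k => ENNReal.mul_ne_top ENNReal.coe_ne_top
      ENNReal.ofReal_ne_top
    have hsum : ∑' k, (g k) ^ p.toReal ≠ ∞ := by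
      have heq : ∑' k, (g k) ^ p.toReal
          = ∫⁻ a, (‖x a‖₊ : ℝ≥0∞) ^ p.toReal ∂(wMeasure p ω) := by
        rw [wMeasure_lintegral]
        congr 1
        funext k
        rw [hg, ENNReal.mul_rpow_of_nonneg _ _ hpr.le, ENNReal.ofReal_rpow_of_pos (hω k)]
      have hlt : ∫⁻ a, (‖x a‖₊ : ℝ≥0∞) ^ p.toReal ∂(wMeasure p ω)
          = (eLpNorm x p (wMeasure p ω)) ^ p.toReal := by
        rw [eLpNorm_eq_lintegral_rpow_enorm_toReal hp0 hp, ← ENNReal.rpow_mul,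
          one_div_mul_cancel hpr.ne', ENNReal.rpow_one]
        rfl
      rw [heq, hlt]
      exact ENNReal.rpow_ne_top_of_nonneg hpr.le (Lp.eLpNorm_ne_top x)
    have hcof : Tendsto (fun k => (g k) ^ p.toReal) cofinite (nhds 0) :=
      ENNReal.tendsto_cofinite_zero_of_tsum_ne_top hsum
    have hinj : Function.Injective (fun i => k₀ + (n i : ℤ)) := by
      intro a b hab
      simp only [add_right_inj, Int.natCast_inj] at hab
      exact hn.injective hab
    have hmap : Tendsto (fun i => k₀ + (n i : ℤ)) atTop cofinite := by
      rw [← Nat.cofinite_eq_atTop]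
      exact hinj.tendsto_cofinite
    have h1 : Tendsto (fun i => (g (k₀ + (n i : ℤ))) ^ p.toReal) atTop (nhds 0) :=
      hcof.comp hmap
    have h2 : Tendsto (fun i => g (k₀ + (n i : ℤ))) atTop (nhds 0) := by
      have hcont := (ENNReal.continuous_rpow_const (y := 1 / p.toReal)).tendsto 0
      have := hcont.comp h1
      rw [ENNReal.zero_rpow_of_pos (by positivity)] at this
      refine this.congr fun i => ?_
      simp only [Function.comp_apply]
      rw [← ENNReal.rpow_mul, mul_one_div_cancel hpr.ne', ENNReal.rpow_one]
    have h3 := (ENNReal.tendsto_toReal (by simp)).comp h2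
    simp only [ENNReal.toReal_zero] at h3
    refine h3.congr fun i => ?_
    simp only [Function.comp_apply, hg, ENNReal.toReal_mul, ENNReal.coe_toReal, coe_nnnorm,
      ENNReal.toReal_ofReal (hω _).le]
  -- norms of the products converge to ‖y k₀‖ > 0
  have hc : (0 : ℝ) < ‖y k₀‖ := norm_pos_iff.mpr hk₀
  have hb : Tendsto (fun i => ‖lam i‖ * ‖x (k₀ + (n i : ℤ))‖) atTop (nhds ‖y k₀‖) := by
    have := heval.norm
    simpa [norm_mul] using this
  have hbev : ∀ᶠ i in atTop, 0 < ‖lam i‖ * ‖x (k₀ + (n i : ℤ))‖ :=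
    hb.eventually_const_lt hc
  have hdiv : Tendsto (fun i => (‖x (k₀ + (n i : ℤ))‖ * ω (k₀ + (n i : ℤ))) /
      (‖lam i‖ * ‖x (k₀ + (n i : ℤ))‖)) atTop (nhds 0) := by
    have := hA.div hb hc.ne'
    rw [zero_div] at this
    exact this
  refine hdiv.congr' ?_
  filter_upwards [hbev] with i hi
  have hxne : ‖x (k₀ + (n i : ℤ))‖ ≠ 0 := by
    intro h0
    rw [h0, mul_zero] at hi
    exact lt_irrefl _ hi
  have hlne : ‖lam i‖ ≠ 0 := by
    have := (hlam i).2
    simp only [Set.mem_singleton_iff] at this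
    exact norm_ne_zero_iff.mpr this
  rw [mul_comm ‖lam i‖, mul_div_mul_left _ _ hxne]
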